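/- For every α ∈ [0,1], F(α) is a non-disturbing n-cycle behavior with Ω_γ(F(α)) = n + 2(α − 1). In particular Ω_γ(B_NPR) = n − 2, the behavior B_NPR = F(0) is noncontextual, and F(α) is contextual for every α ∈ (0,1]. -/

import Mathlib

open Finset

/-- The outcome value `±1` encoded by a `Bool`. -/
def sval (b : Bool) : ℝ := if b then 1 else -1

/-- An `n`-cycle behavior: for each context `{X_i, X_{i+1}}` (`i ∈ ZMod n`) a
probability distribution `p i` on pairs of `±1` outcomes (encoded as `Bool`s). -/
def IsNCycleBehavior (n : ℕ) (p : ZMod n → Bool → Bool → ℝ) : Prop :=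
  (∀ i a b, 0 ≤ p i a b) ∧ ∀ i : ZMod n, ∑ a : Bool, ∑ b : Bool, p i a b = 1

/-- Non-disturbance: for all `i` and `b`, `Σ_a p_i(a,b) = Σ_c p_{i+1}(b,c)`. -/
def NCycleNonDisturbing (n : ℕ) (p : ZMod n → Bool → Bool → ℝ) : Prop :=
  ∀ (i : ZMod n) (b : Bool), ∑ a : Bool, p i a b = ∑ c : Bool, p (i + 1) b c

/-- Noncontextuality: existence of a global probability distribution `q` on
`ZMod n → Bool` whose marginals reproduce all the `p i`. -/
def NCycleNoncontextual (n : ℕ) [NeZero n] (p : ZMod n → Bool → Bool → ℝ) : Prop :=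
  ∃ q : (ZMod n → Bool) → ℝ, (∀ x, 0 ≤ q x) ∧ (∑ x : ZMod n → Bool, q x = 1) ∧
    ∀ (i : ZMod n) (a b : Bool),
      p i a b = ∑ x : ZMod n → Bool, (if x i = a ∧ x (i + 1) = b then q x else 0)

/-- A sign vector: `γ : ZMod n → {-1, 1}` with an odd number of entries equal to `-1`. -/
def IsSignVector (n : ℕ) (γ : ZMod n → ℝ) : Prop :=
  (∀ i, γ i = 1 ∨ γ i = -1) ∧ ∃ S : Finset (ZMod n), Odd S.card ∧ ∀ i, γ i = -1 ↔ i ∈ S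

/-- The noncontextuality functional `Ω_γ(p) = Σ_i γ(i) ⟨X_i X_{i+1}⟩_p`, where
`⟨X_i X_{i+1}⟩_p = Σ_{a,b} a·b·p_i(a,b)`. -/
noncomputable def OmegaNC (n : ℕ) [NeZero n] (γ : ZMod n → ℝ)
    (p : ZMod n → Bool → Bool → ℝ) : ℝ :=
  ∑ i : ZMod n, γ i * ∑ a : Bool, ∑ b : Bool, sval a * sval b * p i a b

/-- A type-preserving noncontextual wiring on the `n`-cycle scenario: a finite set `Λ`
(of natural numbers) with a probability distribution `ρ`; a finite set `R` with
pre-processing distributions `q j (·|λ)` on `R`; a context-selection map `g`; and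
post-processing distributions `m j (·|r, s, λ)` on `{-1,1}` (encoded as `Bool`). -/
structure NCWiring (n : ℕ) where
  Λ : Finset ℕ
  ρ : ℕ → ℝ
  ρ_nonneg : ∀ l ∈ Λ, 0 ≤ ρ l
  ρ_sum : ∑ l ∈ Λ, ρ l = 1
  R : Finset ℕ
  q : ZMod n → ℕ → ℕ → ℝ
  q_nonneg : ∀ j l r, 0 ≤ q j l r
  q_sum : ∀ j : ZMod n, ∀ l ∈ Λ, ∑ r ∈ R, q j l r = 1
  g : ZMod n → ℕ → ℕ → ZMod n
  m : ZMod n → ℕ → Bool → ℕ → Bool → ℝ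
  m_nonneg : ∀ j r s l t, 0 ≤ m j r s l t
  m_sum : ∀ j r s l, ∑ t : Bool, m j r s l t = 1

/-- The action of a noncontextual wiring on a behavior:
`(W(B))_i(t,t') = Σ_λ ρ(λ) Σ_{r,r'} q_i(r|λ) q_{i+1}(r'|λ)
  Σ_{s,s'} p_{g(i,r,r')}(s,s') m_i(t|r,s,λ) m_{i+1}(t'|r',s',λ)`. -/
def NCWiring.apply {n : ℕ} (W : NCWiring n) (p : ZMod n → Bool → Bool → ℝ) :
    ZMod n → Bool → Bool → ℝ :=
  fun i t t' => ∑ l ∈ W.Λ, W.ρ l * ∑ r ∈ W.R, ∑ r' ∈ W.R,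
    W.q i l r * W.q (i + 1) l r' * ∑ s : Bool, ∑ s' : Bool,
      p (W.g i r r') s s' * W.m i r s l t * W.m (i + 1) r' s' l t'

/-- A wiring is deterministic when every pre-processing distribution `q j (·|λ)` and
every post-processing distribution `m j (·|r,s,λ)` is a point mass. -/
def NCWiring.IsDeterministic {n : ℕ} (W : NCWiring n) : Prop :=
  (∀ j : ZMod n, ∀ l ∈ W.Λ, ∃ r₀ ∈ W.R, ∀ r ∈ W.R, W.q j l r = if r = r₀ then 1 else 0) ∧
  (∀ (j : ZMod n) (r : ℕ) (s : Bool) (l : ℕ),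
    ∃ t₀ : Bool, ∀ t : Bool, W.m j r s l t = if t = t₀ then 1 else 0)

/-- `B → B'`: some type-preserving noncontextual wiring maps `B` to `B'`. -/
def NCConvertsTo (n : ℕ) (B B' : ZMod n → Bool → Bool → ℝ) : Prop :=
  ∃ W : NCWiring n, W.apply B = B'

/-- The PR-like behavior for a sign vector `γ`: `(B_PR)_i(a,b) = (1 + γ(i)·a·b)/4`. -/
noncomputable def BPR (n : ℕ) (γ : ZMod n → ℝ) : ZMod n → Bool → Bool → ℝ :=
  fun i a b => (1 + γ i * sval a * sval b) / 4

/-- The noisy-PR behavior `B_NPR = ((n-2)/n)·B_PR + (2/n)·B_∅`, where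
`B_∅` is the maximally mixed behavior with all probabilities `1/4`. -/
noncomputable def BNPR (n : ℕ) (γ : ZMod n → ℝ) : ZMod n → Bool → Bool → ℝ :=
  fun i a b => (((n : ℝ) - 2) / (n : ℝ)) * BPR n γ i a b + (2 / (n : ℝ)) * (1 / 4)

/-- The interpolating family `F(α) = α·B_PR + (1-α)·B_NPR`. -/
noncomputable def Fmix (n : ℕ) (γ : ZMod n → ℝ) (α : ℝ) : ZMod n → Bool → Bool → ℝ :=
  fun i a b => α * BPR n γ i a b + (1 - α) * BNPR n γ i a b


set_option linter.unusedSectionVars false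
set_option maxHeartbeats 1000000

section AuxProof
variable (n : ℕ) [NeZero n] (γ : ZMod n → ℝ)

omit [NeZero n] in
lemma sval_pm (b : Bool) : sval b = 1 ∨ sval b = -1 := by cases b <;> simp [sval]


section
variable (n : ℕ) [NeZero n] (γ : ZMod n → ℝ)

noncomputable def Echi (j : ZMod n) (k : ℕ) : ℝ :=
  (if (k : ZMod n) = j then -1 else 1) * γ (k : ZMod n)

noncomputable def chi (j i : ZMod n) : ℝ := ∏ k ∈ Finset.range i.val, Echi n γ j k

lemma Echi_pm (hγ : ∀ i, γ i = 1 ∨ γ i = -1) (j : ZMod n) (k : ℕ) :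
    Echi n γ j k = 1 ∨ Echi n γ j k = -1 := by
  unfold Echi; rcases hγ (k : ZMod n) with h | h <;> rw [h] <;> split <;> norm_num

lemma chi_pm (hγ : ∀ i, γ i = 1 ∨ γ i = -1) (j i : ZMod n) :
    chi n γ j i = 1 ∨ chi n γ j i = -1 := by
  unfold chi
  induction (Finset.range i.val) using Finset.induction with
  | empty => simp
  | @insert _ _ hx ih =>
    rw [Finset.prod_insert hx]
    rcases Echi_pm n γ hγ j _ with h | h <;> rcases ih with h2 | h2 <;> rw [h, h2] <;> norm_num

lemma prod_gamma (hγ : (∀ i, γ i = 1 ∨ γ i = -1) ∧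
    ∃ S : Finset (ZMod n), Odd S.card ∧ ∀ i, γ i = -1 ↔ i ∈ S) :
    ∏ i : ZMod n, γ i = -1 := by
  obtain ⟨h1, S, hodd, hS⟩ := hγ
  rw [← Finset.prod_sdiff (Finset.subset_univ S)]
  have hA : ∏ i ∈ univ \ S, γ i = 1 := by
    apply Finset.prod_eq_one
    intro i hi
    rcases h1 i with h | h
    · exact h
    · exact absurd ((hS i).mp h) (Finset.mem_sdiff.mp hi).2
  have hB : ∏ i ∈ S, γ i = (-1 : ℝ) ^ S.card := by
    rw [← Finset.prod_const]
    exact Finset.prod_congr rfl fun i hi => (hS i).mpr hi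
  rw [hA, hB, hodd.neg_one_pow, one_mul]

lemma prod_Echi (hγ : (∀ i, γ i = 1 ∨ γ i = -1) ∧
    ∃ S : Finset (ZMod n), Odd S.card ∧ ∀ i, γ i = -1 ↔ i ∈ S) (j : ZMod n) :
    ∏ k ∈ Finset.range n, Echi n γ j k = 1 := by
  have key : ∏ k ∈ Finset.range n, Echi n γ j k
      = ∏ i : ZMod n, ((if i = j then (-1:ℝ) else 1) * γ i) := by
    refine Finset.prod_nbij' (fun k => (k : ZMod n)) (fun i => i.val) ?_ ?_ ?_ ?_ ?_
    · intro k _; exact Finset.mem_univ _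
    · intro i _; exact Finset.mem_range.mpr (ZMod.val_lt i)
    · intro k hk; exact ZMod.val_cast_of_lt (Finset.mem_range.mp hk)
    · intro i _; exact ZMod.natCast_rightInverse i
    · intro k _; rfl
  rw [key, Finset.prod_mul_distrib, prod_gamma n γ hγ]
  rw [Finset.prod_ite_eq' Finset.univ j (fun _ => (-1:ℝ))]
  simp

lemma chi_succ (hγ : (∀ i, γ i = 1 ∨ γ i = -1) ∧
    ∃ S : Finset (ZMod n), Odd S.card ∧ ∀ i, γ i = -1 ↔ i ∈ S) (j i : ZMod n) :
    chi n γ j (i + 1) = ((if i = j then (-1:ℝ) else 1) * γ i) * chi n γ j i := by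
  have hiv : i.val < n := ZMod.val_lt i
  have hcast : ((i.val : ZMod n)) = i := ZMod.natCast_rightInverse i
  have hE : Echi n γ j i.val = (if i = j then (-1:ℝ) else 1) * γ i := by
    unfold Echi; rw [hcast]
  by_cases h : i.val + 1 < n
  · have h1 : (i + 1 : ZMod n) = ((i.val + 1 : ℕ) : ZMod n) := by push_cast [hcast]; ring
    have h2 : (i + 1 : ZMod n).val = i.val + 1 := by
      rw [h1, ZMod.val_cast_of_lt h]
    unfold chi
    rw [h2, Finset.prod_range_succ, hE]; ring
  · have hn : i.val + 1 = n := by omega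
    have h1 : (i + 1 : ZMod n) = 0 := by
      have : (i + 1 : ZMod n) = ((i.val + 1 : ℕ) : ZMod n) := by push_cast [hcast]; ring
      rw [this, hn, ZMod.natCast_self]
    have full : ∏ k ∈ Finset.range (i.val + 1), Echi n γ j k = 1 := by
      rw [hn]; exact prod_Echi n γ hγ j
    rw [Finset.prod_range_succ, hE] at full
    rw [show chi n γ j (i+1) = 1 by unfold chi; rw [h1, ZMod.val_zero, Finset.prod_range_zero]]
    unfold chi
    linear_combination -full
  

open Classical in
noncomputable def Xas (j i : ZMod n) : Bool := if chi n γ j i = 1 then true else false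

lemma sval_Xas (hpm : ∀ j i, chi n γ j i = 1 ∨ chi n γ j i = -1) (j i : ZMod n) :
    sval (Xas n γ j i) = chi n γ j i := by
  rcases hpm j i with h | h <;> simp [Xas, sval, h] <;> norm_num

-- generic sum lemmas
lemma sum_ite_point {α : Type*} [Fintype α] [DecidableEq α] (P : α → Prop) [DecidablePred P]
    (y : α) (c : ℝ) : ∑ x : α, (if P x then (if x = y then c else 0) else 0) = if P y then c else 0 := by
  have h1 : ∀ x : α, (if P x then (if x = y then c else 0) else 0)
      = (if x = y then (if P y then c else 0) else 0) := by
    intro x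
    by_cases h : x = y
    · subst h; simp
    · simp [h]
  rw [Finset.sum_congr rfl fun x _ => h1 x, Finset.sum_ite_eq' Finset.univ y _]
  simp

lemma pair_ind (u v a b : Bool) :
    (if u = a ∧ v = b then (1:ℝ) else 0) + (if (!u) = a ∧ (!v) = b then 1 else 0)
      = (1 + sval u * sval v * sval a * sval b) / 2 := by
  cases u <;> cases v <;> cases a <;> cases b <;> norm_num [sval]

end


section
variable (n : ℕ) [NeZero n] (γ : ZMod n → ℝ)

lemma BNPR_noncontextual (hn : 3 ≤ n)
    (hγ : (∀ i, γ i = 1 ∨ γ i = -1) ∧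
      ∃ S : Finset (ZMod n), Odd S.card ∧ ∀ i, γ i = -1 ↔ i ∈ S) :
    ∃ q : (ZMod n → Bool) → ℝ, (∀ x, 0 ≤ q x) ∧ (∑ x : ZMod n → Bool, q x = 1) ∧
      ∀ (i : ZMod n) (a b : Bool),
        BNPR n γ i a b = ∑ x : ZMod n → Bool, (if x i = a ∧ x (i + 1) = b then q x else 0) := by
  classical
  have hnR : (0:ℝ) < (n:ℝ) := by exact_mod_cast Nat.pos_of_ne_zero (NeZero.ne n)
  have hnne : (n:ℝ) ≠ 0 := ne_of_gt hnR
  have hpm : ∀ j i, chi n γ j i = 1 ∨ chi n γ j i = -1 := chi_pm n γ hγ.1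
  set X : ZMod n → ZMod n → Bool := Xas n γ with hX
  refine ⟨fun x => ∑ j : ZMod n, (1/(2*(n:ℝ))) *
      ((if x = X j then 1 else 0) + (if x = (fun i => !(X j i)) then 1 else 0)), ?_, ?_, ?_⟩
  · intro x
    apply Finset.sum_nonneg
    intro j _
    have : (0:ℝ) ≤ (if x = X j then (1:ℝ) else 0) + (if x = (fun i => !(X j i)) then 1 else 0) := by
      positivity
    positivity
  · rw [Finset.sum_comm]
    have h1 : ∀ j : ZMod n, ∑ x : ZMod n → Bool, (1/(2*(n:ℝ))) *
        ((if x = X j then (1:ℝ) else 0) + (if x = (fun i => !(X j i)) then 1 else 0))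
        = 1 / (n:ℝ) := by
      intro j
      rw [← Finset.mul_sum, Finset.sum_add_distrib,
        Finset.sum_ite_eq' Finset.univ (X j) (fun _ => (1:ℝ)),
        Finset.sum_ite_eq' Finset.univ (fun i => !(X j i)) (fun _ => (1:ℝ))]
      simp
      field_simp
      ring
    rw [Finset.sum_congr rfl fun j _ => h1 j, Finset.sum_const, Finset.card_univ, ZMod.card]
    rw [nsmul_eq_mul]; field_simp
  · intro i a b
    have hsucc : ∀ j : ZMod n, sval (X j i) * sval (X j (i+1))
        = (if i = j then (-1:ℝ) else 1) * γ i := by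
      intro j
      rw [hX, sval_Xas n γ hpm, sval_Xas n γ hpm, chi_succ n γ hγ j i]
      rcases hpm j i with h | h <;> rw [h] <;> ring
    have hinner : ∀ j : ZMod n,
        (∑ x : ZMod n → Bool, if x i = a ∧ x (i+1) = b then (1/(2*(n:ℝ))) *
          ((if x = X j then (1:ℝ) else 0) + (if x = (fun k => !(X j k)) then 1 else 0)) else 0)
        = (1/(2*(n:ℝ))) * ((1 + ((if i = j then (-1:ℝ) else 1) * γ i) * sval a * sval b) / 2) := by
      intro j
      have hsplit : ∀ x : ZMod n → Bool,
          (if x i = a ∧ x (i+1) = b then (1/(2*(n:ℝ))) *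
            ((if x = X j then (1:ℝ) else 0) + (if x = (fun k => !(X j k)) then 1 else 0)) else 0)
          = (1/(2*(n:ℝ))) * ((if x i = a ∧ x (i+1) = b then (if x = X j then (1:ℝ) else 0) else 0)
            + (if x i = a ∧ x (i+1) = b then (if x = (fun k => !(X j k)) then (1:ℝ) else 0) else 0)) := by
        intro x; split_ifs <;> ring
      rw [Finset.sum_congr rfl fun x _ => hsplit x, ← Finset.mul_sum, Finset.sum_add_distrib,
        sum_ite_point (fun x : ZMod n → Bool => x i = a ∧ x (i+1) = b) (X j) 1,
        sum_ite_point (fun x : ZMod n → Bool => x i = a ∧ x (i+1) = b) (fun k => !(X j k)) 1]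
      have := pair_ind (X j i) (X j (i+1)) a b
      rw [show ((if X j i = a ∧ X j (i+1) = b then (1:ℝ) else 0)
          + (if (fun k => !(X j k)) i = a ∧ (fun k => !(X j k)) (i+1) = b then (1:ℝ) else 0))
          = (1 + sval (X j i) * sval (X j (i+1)) * sval a * sval b) / 2 from this, hsucc j]
    have hpush : (∑ x : ZMod n → Bool, (if x i = a ∧ x (i + 1) = b then
        (∑ j : ZMod n, (1/(2*(n:ℝ))) *
          ((if x = X j then (1:ℝ) else 0) + (if x = (fun k => !(X j k)) then 1 else 0))) else 0))
        = ∑ j : ZMod n, (∑ x : ZMod n → Bool, if x i = a ∧ x (i+1) = b then (1/(2*(n:ℝ))) *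
          ((if x = X j then (1:ℝ) else 0) + (if x = (fun k => !(X j k)) then 1 else 0)) else 0) := by
      rw [← Finset.sum_comm]
      apply Finset.sum_congr rfl
      intro x _
      split_ifs <;> simp
    rw [hpush, Finset.sum_congr rfl fun j _ => hinner j]
    have hsum2 : ∑ j : ZMod n, (1/(2*(n:ℝ))) *
        ((1 + ((if i = j then (-1:ℝ) else 1) * γ i) * sval a * sval b) / 2)
        = (1/(4*(n:ℝ))) * ((n:ℝ) + ((n:ℝ) - 2) * (γ i * sval a * sval b)) := by
      have hptw : ∀ j : ZMod n, (1/(2*(n:ℝ))) *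
          ((1 + ((if i = j then (-1:ℝ) else 1) * γ i) * sval a * sval b) / 2)
          = (1/(4*(n:ℝ))) * (1 + γ i * sval a * sval b)
            - (if i = j then (1/(2*(n:ℝ))) * (γ i * sval a * sval b) else 0) := by
        intro j; split_ifs <;> ring
      rw [Finset.sum_congr rfl fun j _ => hptw j, Finset.sum_sub_distrib, Finset.sum_const,
        Finset.sum_ite_eq Finset.univ i (fun _ => (1/(2*(n:ℝ))) * (γ i * sval a * sval b)),
        Finset.card_univ, ZMod.card]
      simp only [Finset.mem_univ, if_true, nsmul_eq_mul]
      field_simp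
      ring
    rw [hsum2]
    unfold BNPR BPR
    field_simp
    ring
end


lemma sum_pair_sval (u v : Bool) (c : ℝ) :
    ∑ a : Bool, ∑ b : Bool, sval a * sval b * (if u = a ∧ v = b then c else 0)
      = sval u * sval v * c := by
  cases u <;> cases v <;> simp [Fintype.sum_bool, sval] <;> ring

lemma main_parts (hγ1 : ∀ i, γ i = 1 ∨ γ i = -1) (c : ℝ) (hc0 : 0 ≤ c) (hc1 : c ≤ 1)
    (p : ZMod n → Bool → Bool → ℝ)
    (hp : ∀ i a b, p i a b = (1 + c * (γ i * (sval a * sval b))) / 4) :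
    IsNCycleBehavior n p ∧ NCycleNonDisturbing n p ∧ OmegaNC n γ p = c * n := by
  have hx : ∀ (i : ZMod n) (a b : Bool),
      γ i * (sval a * sval b) = 1 ∨ γ i * (sval a * sval b) = -1 := by
    intro i a b
    rcases hγ1 i with h | h <;> rcases sval_pm a with ha | ha <;> rcases sval_pm b with hb | hb <;>
      rw [h, ha, hb] <;> norm_num
  refine ⟨⟨?_, ?_⟩, ?_, ?_⟩
  · intro i a b
    rw [hp]
    rcases hx i a b with h | h <;> rw [h] <;> linarith
  · intro i
    simp only [hp, Fintype.sum_bool]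
    simp [sval]
    ring
  · intro i b
    simp only [hp, Fintype.sum_bool]
    cases b <;> simp [sval] <;> ring
  · unfold OmegaNC
    have hi : ∀ i : ZMod n, ∑ a : Bool, ∑ b : Bool, sval a * sval b * p i a b = c * γ i := by
      intro i
      simp only [hp, Fintype.sum_bool]
      simp [sval]
      ring
    rw [Finset.sum_congr rfl fun i _ => by rw [hi i]]
    have : ∀ i : ZMod n, γ i * (c * γ i) = c := by
      intro i; rcases hγ1 i with h | h <;> rw [h] <;> ring
    rw [Finset.sum_congr rfl fun i _ => this i, Finset.sum_const, Finset.card_univ, ZMod.card,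
      nsmul_eq_mul, mul_comm]

lemma sval_pm' (b : Bool) : sval b = 1 ∨ sval b = -1 := sval_pm b

lemma omega_bound (hγ : IsSignVector n γ)
    (q : (ZMod n → Bool) → ℝ) (hq0 : ∀ x, 0 ≤ q x) (hq1 : ∑ x : ZMod n → Bool, q x = 1)
    (p : ZMod n → Bool → Bool → ℝ)
    (hrep : ∀ (i : ZMod n) (a b : Bool),
      p i a b = ∑ x : ZMod n → Bool, (if x i = a ∧ x (i + 1) = b then q x else 0)) :
    OmegaNC n γ p ≤ (n : ℝ) - 2 := by
  classical
  obtain ⟨hγ1, hodd⟩ := hγ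
  set t : (ZMod n → Bool) → ZMod n → ℝ :=
    fun x i => γ i * (sval (x i) * sval (x (i + 1))) with ht
  have htpm : ∀ x i, t x i = 1 ∨ t x i = -1 := by
    intro x i
    have heq : t x i = γ i * (sval (x i) * sval (x (i + 1))) := rfl
    rw [heq]
    rcases hγ1 i with h | h <;> rcases sval_pm (x i) with ha | ha <;>
      rcases sval_pm (x (i+1)) with hb | hb <;> rw [h, ha, hb] <;> norm_num
  have hstep1 : ∀ i : ZMod n, ∑ a : Bool, ∑ b : Bool, sval a * sval b * p i a b
      = ∑ x : ZMod n → Bool, q x * (sval (x i) * sval (x (i + 1))) := by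
    intro i
    have : ∀ a : Bool, ∑ b : Bool, sval a * sval b * p i a b
        = ∑ b : Bool, ∑ x : ZMod n → Bool, sval a * sval b *
            (if x i = a ∧ x (i + 1) = b then q x else 0) := by
      intro a
      refine Finset.sum_congr rfl fun b _ => ?_
      rw [hrep, Finset.mul_sum]
    rw [Finset.sum_congr rfl fun a _ => this a]
    rw [show (∑ a : Bool, ∑ b : Bool, ∑ x : ZMod n → Bool, sval a * sval b *
        (if x i = a ∧ x (i + 1) = b then q x else 0))
      = ∑ x : ZMod n → Bool, ∑ a : Bool, ∑ b : Bool, sval a * sval b *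
        (if x i = a ∧ x (i + 1) = b then q x else 0) from by
        rw [Finset.sum_congr rfl fun a (_ : a ∈ Finset.univ) =>
          (Finset.sum_comm : (∑ b : Bool, ∑ x : ZMod n → Bool, sval a * sval b *
            (if x i = a ∧ x (i + 1) = b then q x else 0)) = _)]
        exact Finset.sum_comm]
    refine Finset.sum_congr rfl fun x _ => ?_
    rw [sum_pair_sval (x i) (x (i+1)) (q x)]
    ring
  have hstep2 : OmegaNC n γ p = ∑ x : ZMod n → Bool, q x * ∑ i : ZMod n, t x i := by
    unfold OmegaNC
    rw [Finset.sum_congr rfl fun i (_ : i ∈ Finset.univ) => by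
      rw [hstep1 i, Finset.mul_sum]]
    rw [Finset.sum_comm]
    refine Finset.sum_congr rfl fun x _ => ?_
    rw [Finset.mul_sum]
    refine Finset.sum_congr rfl fun i _ => ?_
    rw [ht]; ring
  have hS : ∀ x : ZMod n → Bool, ∑ i : ZMod n, t x i ≤ (n : ℝ) - 2 := by
    intro x
    have hprod : ∏ i : ZMod n, t x i = -1 := by
      have h1 : ∏ i : ZMod n, t x i
          = (∏ i : ZMod n, γ i) * ((∏ i : ZMod n, sval (x i)) * ∏ i : ZMod n, sval (x (i+1))) := by
        rw [ht, ← Finset.prod_mul_distrib, ← Finset.prod_mul_distrib]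
      have h2 : ∏ i : ZMod n, sval (x (i + 1)) = ∏ i : ZMod n, sval (x i) :=
        Fintype.prod_bijective (· + (1 : ZMod n)) (Equiv.addRight (1 : ZMod n)).bijective
          (fun i => sval (x (i + 1))) (fun i => sval (x i)) (fun i => rfl)
      have h3 : (∏ i : ZMod n, sval (x i)) * ∏ i : ZMod n, sval (x i) = 1 := by
        rw [← Finset.prod_mul_distrib]
        exact Finset.prod_eq_one fun i _ => by
          rcases sval_pm (x i) with h | h <;> rw [h] <;> norm_num
      rw [h1, h2, h3, prod_gamma n γ ⟨hγ1, hodd⟩, mul_one]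
    have hne : (Finset.univ : Finset (ZMod n)).Nonempty := Finset.univ_nonempty
    obtain ⟨i₀, hi₀⟩ : ∃ i₀ : ZMod n, t x i₀ = -1 := by
      by_contra hcon
      push_neg at hcon
      have : ∏ i : ZMod n, t x i = 1 :=
        Finset.prod_eq_one fun i _ => (htpm x i).resolve_right (hcon i)
      rw [this] at hprod; norm_num at hprod
    rw [← Finset.add_sum_erase _ _ (Finset.mem_univ i₀), hi₀]
    have hrest : ∑ i ∈ Finset.univ.erase i₀, t x i ≤ ((Finset.univ.erase i₀).card : ℝ) * 1 := by
      have := Finset.sum_le_card_nsmul (Finset.univ.erase i₀) (t x) 1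
        (fun i _ => by rcases htpm x i with h | h <;> rw [h] <;> norm_num)
      simpa using this
    have hcard : ((Finset.univ.erase i₀).card : ℝ) = (n : ℝ) - 1 := by
      rw [Finset.card_erase_of_mem (Finset.mem_univ i₀), Finset.card_univ, ZMod.card]
      have hn1 : 1 ≤ n := Nat.pos_of_ne_zero (NeZero.ne n)
      push_cast [Nat.cast_sub hn1]
      ring
    rw [hcard] at hrest
    linarith
  rw [hstep2]
  calc ∑ x : ZMod n → Bool, q x * ∑ i : ZMod n, t x i
      ≤ ∑ x : ZMod n → Bool, q x * ((n : ℝ) - 2) :=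
        Finset.sum_le_sum fun x _ => mul_le_mul_of_nonneg_left (hS x) (hq0 x)
    _ = (n : ℝ) - 2 := by rw [← Finset.sum_mul, hq1, one_mul]

end AuxProof

/-- for every `α ∈ [0,1]`, `F(α)` is a non-disturbing `n`-cycle behavior
with `Ω_γ(F(α)) = n + 2(α - 1)`. In particular `Ω_γ(B_NPR) = n - 2`, the behavior
`B_NPR = F(0)` is noncontextual, and `F(α)` is contextual for every `α ∈ (0,1]`. -/
theorem Fmix_properties (n : ℕ) [NeZero n] (hn : 3 ≤ n)
    (γ : ZMod n → ℝ) (hγ : IsSignVector n γ) :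
    (∀ α ∈ Set.Icc (0 : ℝ) 1,
      IsNCycleBehavior n (Fmix n γ α) ∧ NCycleNonDisturbing n (Fmix n γ α) ∧
        OmegaNC n γ (Fmix n γ α) = (n : ℝ) + 2 * (α - 1)) ∧
    OmegaNC n γ (BNPR n γ) = (n : ℝ) - 2 ∧
    Fmix n γ 0 = BNPR n γ ∧
    NCycleNoncontextual n (BNPR n γ) ∧
    (∀ α ∈ Set.Ioc (0 : ℝ) 1, ¬ NCycleNoncontextual n (Fmix n γ α)) := by
  classical
  have hnR : (3:ℝ) ≤ (n:ℝ) := by exact_mod_cast hn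
  have hnne : (n:ℝ) ≠ 0 := by positivity
  have hd0 : (0:ℝ) ≤ ((n:ℝ) - 2) / (n:ℝ) := by
    apply div_nonneg <;> linarith
  have hd1 : ((n:ℝ) - 2) / (n:ℝ) ≤ 1 := by
    rw [div_le_one (by linarith)]; linarith
  have hform : ∀ α : ℝ, ∀ (i : ZMod n) (a b : Bool), Fmix n γ α i a b
      = (1 + (α + (1 - α) * (((n:ℝ) - 2) / (n:ℝ))) * (γ i * (sval a * sval b))) / 4 := by
    intro α i a b
    simp only [Fmix, BNPR, BPR]
    field_simp
    ring
  have hpart1 : ∀ α ∈ Set.Icc (0:ℝ) 1,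
      IsNCycleBehavior n (Fmix n γ α) ∧ NCycleNonDisturbing n (Fmix n γ α) ∧
        OmegaNC n γ (Fmix n γ α) = (n : ℝ) + 2 * (α - 1) := by
    intro α hα
    obtain ⟨hα0, hα1⟩ := hα
    set c : ℝ := α + (1 - α) * (((n:ℝ) - 2) / (n:ℝ)) with hc
    have h1α : (0:ℝ) ≤ 1 - α := by linarith
    have hc0 : 0 ≤ c := by
      rw [hc]
      have := mul_nonneg h1α hd0
      linarith
    have hc1 : c ≤ 1 := by
      rw [hc]
      have := mul_le_of_le_one_right h1α hd1
      linarith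
    obtain ⟨h1, h2, h3⟩ := main_parts n γ hγ.1 c hc0 hc1 (Fmix n γ α) (hform α)
    refine ⟨h1, h2, ?_⟩
    rw [h3, hc]
    field_simp
    ring
  have hF0 : Fmix n γ 0 = BNPR n γ := by
    funext i a b
    unfold Fmix
    ring
  have hOmegaNPR : OmegaNC n γ (BNPR n γ) = (n : ℝ) - 2 := by
    have := (hpart1 0 ⟨le_refl 0, zero_le_one⟩).2.2
    rw [hF0] at this
    rw [this]; ring
  refine ⟨hpart1, hOmegaNPR, hF0, BNPR_noncontextual n γ hn hγ, ?_⟩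
  intro α hα hcon
  obtain ⟨q, hq0, hq1, hrep⟩ := hcon
  have hb := omega_bound n γ hγ q hq0 hq1 (Fmix n γ α) hrep
  have heq := (hpart1 α ⟨le_of_lt hα.1, hα.2⟩).2.2
  rw [heq] at hb
  have := hα.1
  linarith
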